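/- Let K/F be an algebraic field extension and let x, y ∈ K have degrees m and n over F, respectively. Assume that (C1) F[x]/F and F[y]/F are Galois extensions, (C2) F[x] ∩ F[y] = F, and (C3) if F has prime characteristic p then p does not divide gcd(m, n). Then F[x, y] = F[αx + βy] for all nonzero α, β ∈ F. -/

import Mathlib

open IntermediateField Module

private lemma iterfix {F E : Type*} [Field F] [Field E] [Algebra F E]
    (σ : E ≃ₐ[F] E) (u : E) (d : F) (h : σ u = u + algebraMap F E d) (k : ℕ) :
    (σ ^ k) u = u + k • algebraMap F E d := by
  induction k with
  | zero => simp
  | succ k ih =>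
    rw [pow_succ, AlgEquiv.mul_apply, h, map_add, ih, AlgEquiv.commutes, succ_nsmul]
    abel

private lemma fix_pow_card {F E : Type*} [Field F] [Field E] [Algebra F E]
    (M : IntermediateField F E) [FiniteDimensional F M] [IsGalois F M]
    (σ : E ≃ₐ[F] E) (u : E) (hu : u ∈ M) :
    (σ ^ (Module.finrank F M)) u = u := by
  classical
  have h1 : AlgEquiv.restrictNormalHom M (σ ^ Module.finrank F M) = 1 := by
    rw [map_pow, ← IsGalois.card_aut_eq_finrank F M, pow_card_eq_one']
  have h2 := AlgEquiv.restrictNormalHom_apply M (σ ^ Module.finrank F M) ⟨u, hu⟩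
  rw [h1] at h2
  simpa using h2.symm

private lemma auxkey {F E : Type*} [Field F] [Field E] [Algebra F E]
    [FiniteDimensional F E]
    (x y : E) (m n : ℕ)
    (hm : Module.finrank F (IntermediateField.adjoin F {x}) = m)
    (hn : Module.finrank F (IntermediateField.adjoin F {y}) = n)
    (hGx : IsGalois F (IntermediateField.adjoin F {x}))
    (hGy : IsGalois F (IntermediateField.adjoin F {y}))
    (hInt : IntermediateField.adjoin F {x} ⊓ IntermediateField.adjoin F {y} = ⊥)
    (hm0 : m ≠ 0) (hn0 : n ≠ 0)
    (hchar : ∀ p : ℕ, p.Prime → CharP F p → ¬ p ∣ Nat.gcd m n)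
    (α β : F) (hα : α ≠ 0) (hβ : β ≠ 0)
    (σ : E ≃ₐ[F] E) (hσ : σ (α • x + β • y) = α • x + β • y) :
    σ x = x ∧ σ y = y := by
  classical
  haveI := hGx; haveI := hGy
  set Mx := IntermediateField.adjoin F {x} with hMx
  set My := IntermediateField.adjoin F {y} with hMy
  have hxM : x ∈ Mx := IntermediateField.mem_adjoin_simple_self F x
  have hyM : y ∈ My := IntermediateField.mem_adjoin_simple_self F y
  set a := algebraMap F E α with ha'
  set b := algebraMap F E β with hb'
  have ha : a ≠ 0 := by
    simpa [ha'] using (map_ne_zero_iff _ (algebraMap F E).injective).mpr hα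
  have hb : b ≠ 0 := by
    simpa [hb'] using (map_ne_zero_iff _ (algebraMap F E).injective).mpr hβ
  have hσx : σ x ∈ Mx := by
    have h : ((σ.toAlgHom.comp Mx.val).fieldRange : IntermediateField F E) = Mx :=
      AlgHom.fieldRange_of_normal _
    rw [← h]
    exact ⟨⟨x, hxM⟩, rfl⟩
  have hσy : σ y ∈ My := by
    have h : ((σ.toAlgHom.comp My.val).fieldRange : IntermediateField F E) = My :=
      AlgHom.fieldRange_of_normal _
    rw [← h]
    exact ⟨⟨y, hyM⟩, rfl⟩
  have h1 : a * σ x + b * σ y = a * x + b * y := by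
    simp only [Algebra.smul_def] at hσ
    rw [map_add, map_mul, map_mul, AlgEquiv.commutes, AlgEquiv.commutes] at hσ
    exact hσ
  have hw2 : a * (σ x - x) = b * (y - σ y) := by ring_nf; linear_combination h1
  have hwmem : a * (σ x - x) ∈ Mx ⊓ My := by
    constructor
    · exact mul_mem (Mx.algebraMap_mem α) (sub_mem hσx hxM)
    · rw [hw2]
      exact mul_mem (My.algebraMap_mem β) (sub_mem hyM hσy)
  rw [hInt] at hwmem
  obtain ⟨c, hc⟩ := IntermediateField.mem_bot.mp hwmem
  by_cases hc0 : c = 0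
  · rw [hc0, map_zero] at hc
    have hx' : σ x = x := by
      have := hc.symm
      rw [mul_eq_zero, sub_eq_zero] at this
      exact this.resolve_left ha
    refine ⟨hx', ?_⟩
    have := hw2
    rw [hx', sub_self, mul_zero, eq_comm, mul_eq_zero, sub_eq_zero] at this
    exact (this.resolve_left hb).symm
  · exfalso
    -- σ x = x + algebraMap (α⁻¹ * c), σ y = y - algebraMap (β⁻¹ * c)
    have hxs : σ x = x + algebraMap F E (α⁻¹ * c) := by
      have h2 : algebraMap F E (α⁻¹ * c) = a⁻¹ * algebraMap F E c := by
        rw [map_mul, map_inv₀]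
      rw [h2, hc, inv_mul_cancel_left₀ ha]
      ring
    have hys : σ y = y + algebraMap F E (-(β⁻¹ * c)) := by
      have h2 : algebraMap F E (-(β⁻¹ * c)) = -(b⁻¹ * algebraMap F E c) := by
        rw [map_neg, map_mul, map_inv₀]
      rw [h2, hc, hw2, inv_mul_cancel_left₀ hb]
      ring
    haveI : FiniteDimensional F Mx := inferInstance
    haveI : FiniteDimensional F My := inferInstance
    have hxm : (σ ^ m) x = x := by
      have := fix_pow_card Mx σ x hxM
      rwa [hm] at this
    have hyn : (σ ^ n) y = y := by
      have := fix_pow_card My σ y hyM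
      rwa [hn] at this
    have hmd : (m : F) * (α⁻¹ * c) = 0 := by
      have h3 := iterfix σ x (α⁻¹ * c) hxs m
      rw [hxm, left_eq_add, ← map_nsmul, nsmul_eq_mul] at h3
      exact (map_eq_zero_iff _ (algebraMap F E).injective).mp h3
    have hnd : (n : F) * (-(β⁻¹ * c)) = 0 := by
      have h3 := iterfix σ y (-(β⁻¹ * c)) hys n
      rw [hyn, left_eq_add, ← map_nsmul, nsmul_eq_mul] at h3
      exact (map_eq_zero_iff _ (algebraMap F E).injective).mp h3
    have hmc : (m : F) = 0 := by
      rcases mul_eq_zero.mp hmd with h | h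
      · exact h
      · exact absurd h (mul_ne_zero (inv_ne_zero hα) hc0)
    have hnc : (n : F) = 0 := by
      rcases mul_eq_zero.mp hnd with h | h
      · exact h
      · exact absurd h (neg_ne_zero.mpr (mul_ne_zero (inv_ne_zero hβ) hc0))
    haveI : CharP F (ringChar F) := ringChar.charP F
    rcases CharP.char_is_prime_or_zero F (ringChar F) with hp | hp
    · have pm : ringChar F ∣ m := (CharP.cast_eq_zero_iff F (ringChar F) m).mp hmc
      have pn : ringChar F ∣ n := (CharP.cast_eq_zero_iff F (ringChar F) n).mp hnc
      exact hchar (ringChar F) hp (ringChar.charP F) (Nat.dvd_gcd pm pn)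
    · haveI : CharP F 0 := by rw [← hp]; exact ringChar.charP F
      haveI : CharZero F := CharP.charP_to_charZero F
      exact hm0 (Nat.cast_eq_zero.mp hmc)

/-- **Theorem (gen).** Let `K/F` be an algebraic field extension and let `x, y ∈ K` have
degrees `m` and `n` over `F`.  Assume (C1) `F[x]/F` and `F[y]/F` are Galois extensions,
(C2) `F[x] ∩ F[y] = F`, and (C3) if `F` has prime characteristic `p` then `p ∤ gcd(m, n)`.
Then `F[x, y] = F[αx + βy]` for all nonzero `α, β ∈ F`. -/
theorem stmt0 (F K : Type*) [Field F] [Field K] [Algebra F K] [Algebra.IsAlgebraic F K]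
    (x y : K) (m n : ℕ)
    (hm : Module.finrank F (IntermediateField.adjoin F {x}) = m)
    (hn : Module.finrank F (IntermediateField.adjoin F {y}) = n)
    (hGx : IsGalois F (IntermediateField.adjoin F {x}))
    (hGy : IsGalois F (IntermediateField.adjoin F {y}))
    (hInt : IntermediateField.adjoin F {x} ⊓ IntermediateField.adjoin F {y} = ⊥)
    (hchar : ∀ p : ℕ, p.Prime → CharP F p → ¬ p ∣ Nat.gcd m n) :
    ∀ α β : F, α ≠ 0 → β ≠ 0 →
      IntermediateField.adjoin F {x, y} =
        IntermediateField.adjoin F {α • x + β • y} := by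
  classical
  intro α β hα hβ
  haveI := hGx; haveI := hGy
  have hxI : IsIntegral F x := (Algebra.IsAlgebraic.isAlgebraic (R := F) x).isIntegral
  have hyI : IsIntegral F y := (Algebra.IsAlgebraic.isAlgebraic (R := F) y).isIntegral
  haveI : FiniteDimensional F (IntermediateField.adjoin F {x}) :=
    IntermediateField.adjoin.finiteDimensional hxI
  haveI : FiniteDimensional F (IntermediateField.adjoin F {y}) :=
    IntermediateField.adjoin.finiteDimensional hyI
  have hm0 : m ≠ 0 := by rw [← hm]; exact Module.finrank_pos.ne'
  have hn0 : n ≠ 0 := by rw [← hn]; exact Module.finrank_pos.ne'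
  have hun : IntermediateField.adjoin F ({x, y} : Set K) =
      IntermediateField.adjoin F {x} ⊔ IntermediateField.adjoin F {y} := by
    rw [Set.insert_eq, IntermediateField.adjoin_union]
  haveI : FiniteDimensional F (IntermediateField.adjoin F ({x, y} : Set K)) := by
    rw [hun]; infer_instance
  haveI : IsGalois F (IntermediateField.adjoin F ({x, y} : Set K)) := by
    rw [hun]; infer_instance
  set E := IntermediateField.adjoin F ({x, y} : Set K) with hE
  have hxE : x ∈ E := IntermediateField.subset_adjoin F _ (by simp)
  have hyE : y ∈ E := IntermediateField.subset_adjoin F _ (by simp)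
  set x' : E := ⟨x, hxE⟩ with hx'
  set y' : E := ⟨y, hyE⟩ with hy'
  -- transfer hypotheses
  have hmapx : ((IntermediateField.adjoin F {x'} : IntermediateField F E)).map E.val
      = IntermediateField.adjoin F {x} := by
    rw [IntermediateField.adjoin_map, Set.image_singleton]
    rfl
  have hmapy : ((IntermediateField.adjoin F {y'} : IntermediateField F E)).map E.val
      = IntermediateField.adjoin F {y} := by
    rw [IntermediateField.adjoin_map, Set.image_singleton]
    rfl
  have hInt' : (IntermediateField.adjoin F {x'} : IntermediateField F E)
      ⊓ (IntermediateField.adjoin F {y'} : IntermediateField F E) = ⊥ := by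
    apply le_antisymm _ bot_le
    intro w hw
    have hw1 : (w : K) ∈ IntermediateField.adjoin F {x} := by
      rw [← hmapx]; exact ⟨w, hw.1, rfl⟩
    have hw2 : (w : K) ∈ IntermediateField.adjoin F {y} := by
      rw [← hmapy]; exact ⟨w, hw.2, rfl⟩
    have : (w : K) ∈ (⊥ : IntermediateField F K) := hInt ▸ ⟨hw1, hw2⟩
    obtain ⟨c, hc⟩ := IntermediateField.mem_bot.mp this
    refine IntermediateField.mem_bot.mpr ⟨c, ?_⟩
    apply Subtype.ext
    rw [← hc]
    rfl
  -- Galois correspondence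
  set z' : E := α • x' + β • y' with hz'
  have hval : E.val z' = α • x + β • y := rfl
  set L : IntermediateField F E := IntermediateField.adjoin F {z'} with hL
  have hfixL : ∀ g : L.fixingSubgroup, ∀ u : E, u ∈ L → (g : E ≃ₐ[F] E) u = u :=
    fun g u hu => (IntermediateField.mem_fixingSubgroup_iff L g.1).mp g.2 u hu
  have key : ∀ g : L.fixingSubgroup, (g : E ≃ₐ[F] E) x' = x' ∧ (g : E ≃ₐ[F] E) y' = y' := by
    intro g
    refine auxkey x' y' m n ?_ ?_ ?_ ?_ hInt' hm0 hn0 hchar α β hα hβ g.1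
      (hfixL g z' (IntermediateField.mem_adjoin_simple_self F z'))
    · rw [(IntermediateField.equivMap (IntermediateField.adjoin F {x'}) E.val)
        |>.toLinearEquiv.finrank_eq, hmapx, hm]
    · rw [(IntermediateField.equivMap (IntermediateField.adjoin F {y'}) E.val)
        |>.toLinearEquiv.finrank_eq, hmapy, hn]
    · exact IsGalois.of_algEquiv (((IntermediateField.equivMap
        (IntermediateField.adjoin F {x'}) E.val).trans
        (IntermediateField.equivOfEq hmapx)).symm)
    · exact IsGalois.of_algEquiv (((IntermediateField.equivMap
        (IntermediateField.adjoin F {y'}) E.val).trans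
        (IntermediateField.equivOfEq hmapy)).symm)
  have hfEq := IsGalois.fixedField_fixingSubgroup L
  have hxL : x' ∈ L := by
    rw [← hfEq]
    exact fun g => (key g).1
  have hyL : y' ∈ L := by
    rw [← hfEq]
    exact fun g => (key g).2
  have hmapz : L.map E.val = IntermediateField.adjoin F {α • x + β • y} := by
    rw [hL, IntermediateField.adjoin_map, Set.image_singleton, hval]
  have hxz : x ∈ IntermediateField.adjoin F {α • x + β • y} := by
    rw [← hmapz]; exact ⟨x', hxL, rfl⟩
  have hyz : y ∈ IntermediateField.adjoin F {α • x + β • y} := by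
    rw [← hmapz]; exact ⟨y', hyL, rfl⟩
  apply le_antisymm
  · rw [IntermediateField.adjoin_le_iff]
    intro w hw
    rcases hw with rfl | hw
    · exact hxz
    · rw [Set.mem_singleton_iff] at hw; subst hw; exact hyz
  · rw [IntermediateField.adjoin_le_iff]
    intro w hw
    rw [Set.mem_singleton_iff] at hw; subst hw
    exact add_mem (IntermediateField.smul_mem _ (IntermediateField.subset_adjoin F _ (by simp)))
      (IntermediateField.smul_mem _ (IntermediateField.subset_adjoin F _ (by simp)))
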